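/- Let m ≥ 1. There is a constant C > 0 such that for all t ≥ 0, all b ∈ ℝ, all unit vectors V ∈ ℍ^m, and all (X,Z) ∈ ℍ^m × Im(ℍ): |(E_V f_{t,b})(X,Z)| ≤ C · B_t(X,Z)^{−1/4} · (1 + |b|), where B_t(X,Z) = (e^{−2t} + ‖X‖²/4)² + |Z|² and f_{t,b} : ℍ^m × Im(ℍ) → ℂ is the complex-valued function f_{t,b}(X,Z) = B_t(X,Z)^{ib} := exp(i·b·log B_t(X,Z)). -/

import Mathlib

open Quaternion

noncomputable section

/-- The imaginary part `Im(q) = (q - q*)/2` of a quaternion. -/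
def qIm (q : Quaternion ℝ) : Quaternion ℝ := (q - star q) / 2

/-- The left-invariant vector field `E_V` of the 2-step nilpotent group
`N̄ = ℍ^m × Im(ℍ)`, acting on (`F`-valued) functions on `ℍ^m × ℍ` by
`(E_V f)(X,Z) = Df(X,Z)[(V, Im(X*V)/2)]` (Fréchet derivative). -/
def EV {F : Type*} [NormedAddCommGroup F] [NormedSpace ℝ F] (m : ℕ)
    (V : Fin m → Quaternion ℝ)
    (f : (Fin m → Quaternion ℝ) × Quaternion ℝ → F) :
    (Fin m → Quaternion ℝ) × Quaternion ℝ → F :=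
  fun p => fderiv ℝ f p (V, qIm (∑ j, star (p.1 j) * V j) / 2)

/-- `B_t(X,Z) = (e^{-2t} + ‖X‖²/4)² + |Z|²` as a function on `ℍ^m × ℍ`,
where `‖X‖² = ∑ⱼ |Xⱼ|²`. -/
def BtF (m : ℕ) (t : ℝ) : (Fin m → Quaternion ℝ) × Quaternion ℝ → ℝ :=
  fun p => (Real.exp (-2 * t) + (∑ j, Quaternion.normSq (p.1 j)) / 4) ^ 2
    + Quaternion.normSq p.2

/-- The complex-valued function `f_{t,b} = B_t^{ib} = exp(i·b·log B_t)`. -/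
def ftb (m : ℕ) (t b : ℝ) : (Fin m → Quaternion ℝ) × Quaternion ℝ → ℂ :=
  fun p => Complex.exp (Complex.I * b * Real.log (BtF m t p))

set_option maxHeartbeats 1000000 in
/-- there is `C > 0` with
`|E_V (B_t^{ib})| ≤ C · B_t^{-1/4} · (1 + |b|)` for all `t ≥ 0`, all `b ∈ ℝ`,
all unit vectors `V ∈ ℍ^m` and all `(X,Z) ∈ ℍ^m × Im(ℍ)`. -/
theorem stmt_13 (m : ℕ) (hm : 1 ≤ m) :
    ∃ C : ℝ, 0 < C ∧ ∀ t : ℝ, 0 ≤ t → ∀ b : ℝ, ∀ V : Fin m → Quaternion ℝ,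
      (∑ k, Quaternion.normSq (V k)) = 1 →
      ∀ X : Fin m → Quaternion ℝ, ∀ Z : Quaternion ℝ, Z.re = 0 →
        ‖EV m V (ftb m t b) (X, Z)‖
          ≤ C * BtF m t (X, Z) ^ (-(1 : ℝ) / 4) * (1 + |b|) := by
  refine ⟨4, by norm_num, ?_⟩
  intro t ht b V hV X Z hZre
  have hns : ∀ a : ℍ, Quaternion.normSq a = ‖a‖ ^ 2 := fun a => by
    rw [Quaternion.normSq_eq_norm_mul_self, sq]
  set W : ℍ := qIm (∑ j, star (X j) * V j) / 2 with hW
  set p : (Fin m → ℍ) × ℍ := (X, Z) with hp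
  set cc : ℝ := Real.exp (-2 * t) with hcc
  have hccpos : 0 < cc := Real.exp_pos _
  set g : ℝ := ∑ j, ‖X j‖ ^ 2 with hg
  have hgnn : 0 ≤ g := Finset.sum_nonneg fun j _ => by positivity
  set u : ℝ := cc + g / 4 with hu
  have hupos : 0 < u := by rw [hu]; linarith
  have hBeq : BtF m t p = u ^ 2 + ‖Z‖ ^ 2 := by
    simp only [BtF, hns, ← hcc, hp, hu, hg]
  have hBpos : 0 < BtF m t p := by rw [hBeq]; positivity
  -- the derivative of BtF
  have main : ∃ L : ((Fin m → ℍ) × ℍ) →L[ℝ] ℝ, HasFDerivAt (BtF m t) L p ∧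
      L (V, W) = u * ∑ j, inner ℝ (X j) (V j) + 2 * inner ℝ Z W := by
    have h1 := HasFDerivAt.fun_sum (u := Finset.univ)
      (fun j (_ : j ∈ Finset.univ) =>
        HasFDerivAt.norm_sq (((ContinuousLinearMap.proj j).comp
          (ContinuousLinearMap.fst ℝ (Fin m → ℍ) ℍ)).hasFDerivAt (x := p)))
    have h2 := (h1.const_mul (4⁻¹ : ℝ)).const_add cc
    have h3 := h2.fun_mul h2
    have h4 := h3.fun_add
      (((ContinuousLinearMap.snd ℝ (Fin m → ℍ) ℍ).hasFDerivAt (x := p)).norm_sq)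
    have key : (fun x : (Fin m → ℍ) × ℍ =>
        (cc + 4⁻¹ * ∑ j, ‖x.1 j‖ ^ 2) * (cc + 4⁻¹ * ∑ j, ‖x.1 j‖ ^ 2) + ‖x.2‖ ^ 2)
        = BtF m t := by
      funext q
      simp only [BtF, hns, ← hcc]
      ring
    refine ⟨_, key ▸ h4, ?_⟩
    simp only [ContinuousLinearMap.add_apply, ContinuousLinearMap.smul_apply,
      ContinuousLinearMap.comp_apply, ContinuousLinearMap.coe_fst',
      ContinuousLinearMap.coe_snd', ContinuousLinearMap.proj_apply,
      ContinuousLinearMap.sum_apply, innerSL_apply_apply, smul_eq_mul, hp,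
      nsmul_eq_mul, Nat.cast_ofNat, hns, mul_comm _ (2 : ℝ), ← Finset.mul_sum,
      hu, hg]
    ring
  obtain ⟨L, hL, hLv⟩ := main
  -- derivative of ftb
  have h6 := hL.log hBpos.ne'
  have h7 := Complex.ofRealCLM.hasFDerivAt.comp p h6
  have h8 := h7.const_mul (Complex.I * b)
  have h9 := h8.cexp
  have h9' : HasFDerivAt (ftb m t b)
      (Complex.exp (Complex.I * b * Real.log (BtF m t p)) •
        ((Complex.I * b) • (Complex.ofRealCLM.comp ((BtF m t p)⁻¹ • L)))) p := h9
  have hEV : EV m V (ftb m t b) p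
      = Complex.exp (Complex.I * b * Real.log (BtF m t p)) *
        ((Complex.I * b) * (((BtF m t p)⁻¹ * L (V, W) : ℝ) : ℂ)) := by
    simp only [EV, hp]
    rw [h9'.fderiv]
    simp [ContinuousLinearMap.smul_apply, ContinuousLinearMap.comp_apply,
      Complex.ofRealCLM_apply, smul_eq_mul, ← hW]
    rfl
  -- the absolute value
  have habs : ‖EV m V (ftb m t b) p‖
      = |b| * (|L (V, W)| * (BtF m t p)⁻¹) := by
    have hre : (Complex.I * ↑b * ↑(Real.log (BtF m t p))).re = 0 := by simp
    rw [hEV, norm_mul, norm_mul, norm_mul, Complex.norm_exp, hre, Real.exp_zero,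
      Complex.norm_I, Complex.norm_real, Complex.norm_real, Real.norm_eq_abs, Real.norm_eq_abs, abs_mul, abs_inv,
      abs_of_pos hBpos]
    ring
  -- bound on |L (V,W)|
  set s : ℝ := ∑ j, ‖X j‖ * ‖V j‖ with hs
  have hsnn : 0 ≤ s := Finset.sum_nonneg fun j _ => by positivity
  have hs1 : |∑ j, (inner ℝ (X j) (V j) : ℝ)| ≤ s := by
    refine (Finset.abs_sum_le_sum_abs _ _).trans (Finset.sum_le_sum fun j _ => ?_)
    exact abs_real_inner_le_norm _ _
  have hVn : ∑ k, ‖V k‖ ^ 2 = 1 := by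
    rw [← hV]; exact Finset.sum_congr rfl fun k _ => (hns (V k)).symm
  have hs2 : s ≤ Real.sqrt g := by
    have := Real.sum_mul_le_sqrt_mul_sqrt Finset.univ (fun j => ‖X j‖) (fun j => ‖V j‖)
    rw [hVn] at this
    simpa [hs, hg] using this
  have hSW : ‖W‖ ≤ s / 2 := by
    have hqs : ‖∑ j, star (X j) * V j‖ ≤ s := by
      refine (norm_sum_le _ _).trans ?_
      refine le_of_eq (Finset.sum_congr rfl fun j _ => ?_)
      rw [norm_mul, Quaternion.norm_star]
    have h2n : ‖(2 : ℍ)‖ = 2 := by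
      have hco : ((2 : ℝ) : ℍ) = (2 : ℍ) := by
        have h2c := Quaternion.coe_add (R := ℝ) 1 1
        norm_num at h2c
        exact h2c
      rw [← hco, Quaternion.norm_coe]; norm_num
    have hqim : ∀ q : ℍ, ‖qIm q‖ ≤ ‖q‖ := by
      intro q
      rw [qIm, norm_div, h2n]
      calc ‖q - star q‖ / 2 ≤ (‖q‖ + ‖star q‖) / 2 := by
            gcongr; exact norm_sub_le _ _
        _ = ‖q‖ := by rw [Quaternion.norm_star]; ring
    rw [hW, norm_div, h2n]
    have := hqim (∑ j, star (X j) * V j)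
    linarith
  have hZW : |(inner ℝ Z W : ℝ)| ≤ ‖Z‖ * (s / 2) := by
    refine (abs_real_inner_le_norm _ _).trans ?_
    gcongr
  have hlb : |L (V, W)| ≤ Real.sqrt g * (u + ‖Z‖) := by
    rw [hLv]
    calc |u * ∑ j, (inner ℝ (X j) (V j) : ℝ) + 2 * inner ℝ Z W|
        ≤ |u * ∑ j, (inner ℝ (X j) (V j) : ℝ)| + |2 * (inner ℝ Z W : ℝ)| := abs_add_le _ _
      _ ≤ u * s + 2 * (‖Z‖ * (s / 2)) := by
          have e1 : |u * ∑ j, (inner ℝ (X j) (V j) : ℝ)| ≤ u * s := by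
            rw [abs_mul, abs_of_pos hupos]
            exact mul_le_mul_of_nonneg_left hs1 hupos.le
          have e2 : |2 * (inner ℝ Z W : ℝ)| ≤ 2 * (‖Z‖ * (s / 2)) := by
            rw [abs_mul, abs_two]
            exact mul_le_mul_of_nonneg_left hZW (by norm_num)
          exact add_le_add e1 e2
      _ = s * (u + ‖Z‖) := by ring
      _ ≤ Real.sqrt g * (u + ‖Z‖) := by
          have huz : (0:ℝ) ≤ u + ‖Z‖ := by positivity
          exact mul_le_mul_of_nonneg_right hs2 huz
  clear h6 h7 h8 h9 h9' hEV hLv hL hs1 hZW hs2 hSW hVn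
  -- rpow bookkeeping
  set B : ℝ := BtF m t p with hB
  set r : ℝ := B ^ ((1 : ℝ) / 4) with hr
  clear_value cc g u s B r
  have hrpos : 0 < r := hr ▸ Real.rpow_pos_of_pos hBpos _
  have hr4 : r ^ 4 = B := by
    rw [hr, ← Real.rpow_natCast (B ^ ((1:ℝ)/4)) 4, ← Real.rpow_mul hBpos.le]
    norm_num
  have hneg : B ^ (-(1 : ℝ) / 4) = r⁻¹ := by
    rw [neg_div, Real.rpow_neg hBpos.le, hr]
  have hu_le : u ≤ r ^ 2 := by
    nlinarith [hBeq, hr4, sq_nonneg (u - r ^ 2), sq_nonneg (u + r ^ 2), norm_nonneg Z]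
  have hZ_le : ‖Z‖ ≤ r ^ 2 := by
    nlinarith [hBeq, hr4, sq_nonneg (‖Z‖ - r ^ 2), norm_nonneg Z]
  have hsg : Real.sqrt g ≤ 2 * r := by
    have h1 : g ≤ 4 * r ^ 2 := by linarith [hu_le, hccpos, hu]
    have h2 : Real.sqrt g ≤ Real.sqrt (4 * r ^ 2) := Real.sqrt_le_sqrt h1
    rwa [show 4 * r ^ 2 = (2 * r) ^ 2 by ring, Real.sqrt_sq (by positivity)] at h2
  have hlb2 : |L (V, W)| ≤ 4 * r ^ 3 := by
    calc |L (V, W)| ≤ Real.sqrt g * (u + ‖Z‖) := hlb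
      _ ≤ (2 * r) * (r ^ 2 + r ^ 2) := by
          have h0 : 0 ≤ Real.sqrt g := Real.sqrt_nonneg g
          have h1 : Real.sqrt g * (u + ‖Z‖) ≤ (2 * r) * (u + ‖Z‖) :=
            mul_le_mul_of_nonneg_right hsg (by positivity)
          have h2 : (2 * r) * (u + ‖Z‖) ≤ (2 * r) * (r ^ 2 + r ^ 2) := by
            have : u + ‖Z‖ ≤ r ^ 2 + r ^ 2 := add_le_add hu_le hZ_le
            exact mul_le_mul_of_nonneg_left this (by positivity)
          linarith
      _ = 4 * r ^ 3 := by ring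
  -- finish
  rw [habs, hneg]
  calc |b| * (|L (V, W)| * B⁻¹)
      ≤ |b| * ((4 * r ^ 3) * B⁻¹) := by
        have hBi : (0:ℝ) ≤ B⁻¹ := by positivity
        exact mul_le_mul_of_nonneg_left
          (mul_le_mul_of_nonneg_right hlb2 hBi) (abs_nonneg b)
    _ = 4 * r⁻¹ * |b| := by
        rw [← hr4]; field_simp
    _ ≤ 4 * r⁻¹ * (1 + |b|) := by
        have h1 : |b| ≤ 1 + |b| := by linarith [abs_nonneg b]
        exact mul_le_mul_of_nonneg_left h1 (by positivity)
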